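/- Assume in addition that inf_Θ g > 0 (so that log g is bounded). Let t ∈ ℝ and let μ be an ergodic T-invariant probability measure on (Θ, 𝓑). Then μ(S_t \ S_t') = 0 and μ(R_t' \ S_t) = 0. -/

import Mathlib

open MeasureTheory Filter Topology

/-- The general setting of the paper: a measurable base system with invertible
driving map `T`, a concave fibre function `h` (with its derivative `h'` on `[0,∞)`)
and a bounded measurable positive function `g`. -/
structure Setting (Θ : Type*) [MeasurableSpace Θ] where
  T : Θ → Θ
  Tinv : Θ → Θ
  left_inv : Function.LeftInverse Tinv T
  right_inv : Function.RightInverse Tinv T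
  T_meas : Measurable T
  Tinv_meas : Measurable Tinv
  h : ℝ → ℝ
  h' : ℝ → ℝ
  h_hasDeriv : ∀ x ∈ Set.Ici (0 : ℝ), HasDerivWithinAt h (h' x) (Set.Ici 0) x
  h'_cont : ContinuousOn h' (Set.Ici 0)
  h_strictConcave : StrictConcaveOn ℝ (Set.Ici 0) h
  h_zero : h 0 = 0
  h'_pos : ∀ x : ℝ, 0 < x → 0 < h' x
  h'_zero : h' 0 = 1
  h_sublinear : Tendsto (fun x => h x / x) atTop (𝓝 0)
  g : Θ → ℝ
  g_pos : ∀ θ, 0 < g θ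
  g_bdd : ∃ C : ℝ, ∀ θ, g θ ≤ C
  g_meas : Measurable g

namespace Setting

variable {Θ : Type*} [MeasurableSpace Θ]

/-- The fibre maps `f_t(θ,x) = e^{-t} g(θ) h(x)`. -/
noncomputable def f (S : Setting Θ) (t : ℝ) (θ : Θ) (x : ℝ) : ℝ :=
  Real.exp (-t) * S.g θ * S.h x

/-- The iterated fibre maps: `fn t 0 θ x = x` and
`fn t (n+1) θ x = f t (T^[n] θ) (fn t n θ x)`, so that `fn t 1 = f t`. -/
noncomputable def fn (S : Setting Θ) (t : ℝ) : ℕ → Θ → ℝ → ℝ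
  | 0, _, x => x
  | n + 1, θ, x => S.f t (S.T^[n] θ) (S.fn t n θ x)

/-- `ψ_{t,n}(θ) = f_t^n(T^{-n}θ, M)`. -/
noncomputable def ψ (S : Setting Θ) (t M : ℝ) (n : ℕ) (θ : Θ) : ℝ :=
  S.fn t n (S.Tinv^[n] θ) M

/-- The maximal invariant function `φ_t(θ) = inf_{n ≥ 1} ψ_{t,n}(θ)`. -/
noncomputable def φ (S : Setting Θ) (t M : ℝ) (θ : Θ) : ℝ :=
  ⨅ n : ℕ, S.ψ t M (n + 1) θ

/-- The zero set `N_t = {θ : φ_t(θ) = 0}`. -/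
noncomputable def Nset (S : Setting Θ) (t M : ℝ) : Set Θ := {θ | S.φ t M θ = 0}

/-- The critical parameter `t_c(θ) = inf {t : φ_t(θ) = 0}`. -/
noncomputable def tc (S : Setting Θ) (M : ℝ → ℝ) (θ : Θ) : ℝ :=
  sInf {t : ℝ | S.φ t (M t) θ = 0}

/-- The bifurcation set `S_t = {θ : t_c(θ) = t}`. -/
noncomputable def Sset (S : Setting Θ) (M : ℝ → ℝ) (t : ℝ) : Set Θ :=
  {θ | S.tc M θ = t}

/-- The Birkhoff average `Γ^{(n)}(θ) = (1/n) ∑_{k=1}^n log g(T^{-k}θ)`. -/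
noncomputable def Γn (S : Setting Θ) (n : ℕ) (θ : Θ) : ℝ :=
  (∑ k ∈ Finset.range n, Real.log (S.g (S.Tinv^[k + 1] θ))) / n

/-- The lower backwards Lyapunov average `Γ(θ) = liminf_n Γ^{(n)}(θ)`. -/
noncomputable def Γ (S : Setting Θ) (θ : Θ) : ℝ :=
  Filter.liminf (fun n : ℕ => S.Γn n θ) Filter.atTop

/-- The averaged exponent `γ(μ) = ∫ log g dμ`. -/
noncomputable def γfn (S : Setting Θ) (μ : Measure Θ) : ℝ :=
  ∫ θ, Real.log (S.g θ) ∂μ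

/-- The function `H(x) = log (h(x)/x)`. -/
noncomputable def Hfn (S : Setting Θ) (x : ℝ) : ℝ := Real.log (S.h x / x)

end Setting

/-- The set `S_t' = {θ : lim_n Γ^{(n)}(θ) = t}`. -/
def Setting.S't {Θ : Type*} [MeasurableSpace Θ] (S : Setting Θ) (t : ℝ) : Set Θ :=
  {θ | Tendsto (fun n : ℕ => S.Γn n θ) atTop (𝓝 t)}

/-- The set `R_t' = {θ : Γ^{(n_k)}(θ) → t along some strictly increasing sequence (n_k)}`. -/
def Setting.R't {Θ : Type*} [MeasurableSpace Θ] (S : Setting Θ) (t : ℝ) : Set Θ :=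
  {θ | ∃ nk : ℕ → ℕ, StrictMono nk ∧ (∀ k, 0 < nk k) ∧
    Tendsto (fun k : ℕ => S.Γn (nk k) θ) atTop (𝓝 t)}


section LiminfAux

lemma bddAbove_of_abs {w : ℕ → ℝ} {K : ℝ} (hw : ∀ n, |w n| ≤ K) :
    IsBoundedUnder (· ≤ ·) atTop w :=
  isBoundedUnder_of ⟨K, fun n => (abs_le.1 (hw n)).2⟩

lemma bddBelow_of_abs {w : ℕ → ℝ} {K : ℝ} (hw : ∀ n, |w n| ≤ K) :
    IsBoundedUnder (· ≥ ·) atTop w :=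
  isBoundedUnder_of ⟨-K, fun n => (abs_le.1 (hw n)).1⟩

lemma liminf_le_liminf_of_sub_tendsto (u v : ℕ → ℝ) (K : ℝ) (hu : ∀ n, |u n| ≤ K)
    (hv : ∀ n, |v n| ≤ K) (h : Tendsto (fun n => u n - v n) atTop (𝓝 0)) :
    liminf u atTop ≤ liminf v atTop := by
  refine le_of_forall_pos_le_add ?_
  intro ε hε
  have hev : ∀ᶠ n in atTop, u n ≤ v n + ε := by
    have := h.eventually (eventually_abs_sub_lt 0 hε)
    filter_upwards [this] with n hn
    rw [sub_zero] at hn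
    linarith [(abs_le.1 hn.le).2]
  have h1 : liminf u atTop ≤ liminf (fun n => v n + ε) atTop := by
    refine liminf_le_liminf hev (bddBelow_of_abs hu) ?_
    exact (isBoundedUnder_of ⟨K + ε, fun n => by linarith [(abs_le.1 (hv n)).2]⟩ :
      IsBoundedUnder (· ≤ ·) atTop _).isCoboundedUnder_ge
  have h2 : liminf (fun n => v n + ε) atTop = liminf v atTop + ε :=
    liminf_add_const atTop v ε (bddAbove_of_abs hv).isCoboundedUnder_ge (bddBelow_of_abs hv)
  linarith [h1, h2.le]

lemma liminf_eq_liminf_of_sub_tendsto (u v : ℕ → ℝ) (K : ℝ) (hu : ∀ n, |u n| ≤ K)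
    (hv : ∀ n, |v n| ≤ K) (h : Tendsto (fun n => u n - v n) atTop (𝓝 0)) :
    liminf u atTop = liminf v atTop := by
  refine le_antisymm (liminf_le_liminf_of_sub_tendsto u v K hu hv h) ?_
  refine liminf_le_liminf_of_sub_tendsto v u K hv hu ?_
  simpa [neg_sub] using h.neg

end LiminfAux


section Birkhoff

set_option linter.unusedSectionVars false

variable {Θ : Type*} [MeasurableSpace Θ]

/-- Birkhoff sums. -/
noncomputable def birkS (σ : Θ → Θ) (f : Θ → ℝ) (n : ℕ) (θ : Θ) : ℝ :=
  ∑ k ∈ Finset.range n, f (σ^[k] θ)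

/-- `birkM σ f N θ = max_{1 ≤ n ≤ N+1} birkS σ f n θ`. -/
noncomputable def birkM (σ : Θ → Θ) (f : Θ → ℝ) : ℕ → Θ → ℝ
  | 0 => birkS σ f 1
  | N + 1 => fun θ => max (birkM σ f N θ) (birkS σ f (N + 2) θ)

variable {σ : Θ → Θ} {f : Θ → ℝ}

lemma birkS_succ (n : ℕ) (θ : Θ) : birkS σ f (n + 1) θ = f θ + birkS σ f n (σ θ) := by
  unfold birkS
  rw [Finset.sum_range_succ']
  simp only [Function.iterate_succ_apply, Function.iterate_zero_apply]
  ring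

lemma birkS_meas (hσ : Measurable σ) (hf : Measurable f) (n : ℕ) :
    Measurable (birkS σ f n) := by
  unfold birkS
  exact Finset.measurable_sum _ fun k _ => hf.comp (hσ.iterate k)

lemma abs_birkS_le {K : ℝ} (hK : ∀ θ, |f θ| ≤ K) (n : ℕ) (θ : Θ) :
    |birkS σ f n θ| ≤ n * K := by
  calc |birkS σ f n θ| ≤ ∑ k ∈ Finset.range n, |f (σ^[k] θ)| :=
        Finset.abs_sum_le_sum_abs _ _
    _ ≤ ∑ _k ∈ Finset.range n, K := Finset.sum_le_sum fun k _ => hK _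
    _ = n * K := by simp [mul_comm]

lemma birkM_meas (hσ : Measurable σ) (hf : Measurable f) (N : ℕ) :
    Measurable (birkM σ f N) := by
  induction N with
  | zero => exact birkS_meas hσ hf 1
  | succ N ih => exact ih.max (birkS_meas hσ hf (N + 2))

lemma birkS_le_birkM {n N : ℕ} (hn : n ≤ N) (θ : Θ) :
    birkS σ f (n + 1) θ ≤ birkM σ f N θ := by
  induction N with
  | zero => simp_all [birkM]
  | succ N ih =>
    rcases Nat.lt_or_ge n (N + 1) with h | h
    · exact le_trans (ih (Nat.lt_succ_iff.1 h)) (le_max_left _ _)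
    · have : n = N + 1 := le_antisymm hn h
      subst this
      exact le_max_right _ _

lemma birkM_eq_birkS (N : ℕ) (θ : Θ) : ∃ n ≤ N, birkM σ f N θ = birkS σ f (n + 1) θ := by
  induction N with
  | zero => exact ⟨0, le_rfl, rfl⟩
  | succ N ih =>
    obtain ⟨n, hn, he⟩ := ih
    rcases le_total (birkS σ f (N + 2) θ) (birkM σ f N θ) with h1 | h1
    · exact ⟨n, hn.trans (Nat.le_succ N), by simp only [birkM]; rw [max_eq_left h1, he]⟩
    · exact ⟨N + 1, le_rfl, by simp only [birkM]; rw [max_eq_right h1]⟩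

lemma birkM_mono (N : ℕ) (θ : Θ) : birkM σ f N θ ≤ birkM σ f (N + 1) θ :=
  le_max_left _ _

lemma birkM_mono' {N N' : ℕ} (h : N ≤ N') (θ : Θ) : birkM σ f N θ ≤ birkM σ f N' θ := by
  induction N' with
  | zero => simp_all
  | succ N' ih =>
    rcases Nat.lt_or_ge N (N' + 1) with h' | h'
    · exact (ih (Nat.lt_succ_iff.1 h')).trans (birkM_mono N' θ)
    · have : N = N' + 1 := le_antisymm h h'
      subst this; exact le_rfl

lemma abs_birkM_le {K : ℝ} (hK : ∀ θ, |f θ| ≤ K) (N : ℕ) (θ : Θ) :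
    |birkM σ f N θ| ≤ (N + 1) * K := by
  obtain ⟨n, hn, he⟩ := birkM_eq_birkS (σ := σ) (f := f) N θ
  rw [he]
  have h := abs_birkS_le (σ := σ) hK (n + 1) θ
  push_cast at h
  have hK0 : 0 ≤ K := le_trans (abs_nonneg _) (hK θ)
  have hn' : (n : ℝ) ≤ N := by exact_mod_cast hn
  nlinarith

/-- Garsia's inequality. -/
lemma birkM_key (N : ℕ) (θ : Θ) :
    birkM σ f N θ - max (birkM σ f N (σ θ)) 0 ≤ f θ := by
  obtain ⟨n, hn, he⟩ := birkM_eq_birkS (σ := σ) (f := f) N θ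
  rw [he, birkS_succ]
  have : birkS σ f n (σ θ) ≤ max (birkM σ f N (σ θ)) 0 := by
    cases n with
    | zero => simp [birkS]
    | succ m =>
      exact le_trans (birkS_le_birkM (le_trans (Nat.le_of_succ_le hn) le_rfl) (σ θ))
        (le_max_left _ _)
  linarith

section MaxErg
variable {μ : MeasureTheory.Measure Θ} [IsProbabilityMeasure μ]

lemma integrable_of_bdd {q : Θ → ℝ} {C : ℝ} (hq : Measurable q) (hC : ∀ θ, |q θ| ≤ C) :
    Integrable q μ :=
  (integrable_const C).mono' hq.aestronglyMeasurable
    (Eventually.of_forall fun θ => by simpa using hC θ)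

/-- The maximal ergodic theorem (Garsia's proof). -/
lemma maximal_ergodic (hσ : Measurable σ) (mp : MeasurePreserving σ μ μ)
    (hf : Measurable f) {K : ℝ} (hK : ∀ θ, |f θ| ≤ K) (N : ℕ) :
    0 ≤ ∫ θ in {θ | 0 < birkM σ f N θ}, f θ ∂μ := by
  set A := {θ | 0 < birkM σ f N θ} with hA
  have hMmeas : Measurable (birkM σ f N) := birkM_meas hσ hf N
  have hAmeas : MeasurableSet A := measurableSet_lt measurable_const hMmeas
  set p : Θ → ℝ := fun θ => max (birkM σ f N θ) 0 with hp
  have hpmeas : Measurable p := hMmeas.max measurable_const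
  have hpbdd : ∀ θ, |p θ| ≤ |((N : ℝ) + 1) * K| := by
    intro θ
    rw [abs_of_nonneg (le_max_right _ _)]
    exact max_le ((le_abs_self _).trans ((abs_birkM_le hK N θ).trans (le_abs_self _)))
      (abs_nonneg _)
  have hint_f : Integrable f μ := integrable_of_bdd hf hK
  have hint_p : Integrable p μ := integrable_of_bdd hpmeas hpbdd
  have hint_pσ : Integrable (fun θ => p (σ θ)) μ :=
    integrable_of_bdd (hpmeas.comp hσ) fun θ => hpbdd (σ θ)
  have hint_M : Integrable (birkM σ f N) μ :=
    integrable_of_bdd hMmeas fun θ => (abs_birkM_le hK N θ).trans (le_abs_self _)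
  -- step 1 : ∫_A f ≥ ∫_A (birkM - p ∘ σ)
  have step1 : ∫ θ in A, (birkM σ f N θ - p (σ θ)) ∂μ ≤ ∫ θ in A, f θ ∂μ := by
    refine setIntegral_mono_on ((hint_M.sub hint_pσ).integrableOn) (hint_f.integrableOn)
      hAmeas ?_
    intro θ _
    exact birkM_key N θ
  -- step 2 : split the integral
  have step2 : ∫ θ in A, (birkM σ f N θ - p (σ θ)) ∂μ
      = (∫ θ in A, birkM σ f N θ ∂μ) - ∫ θ in A, p (σ θ) ∂μ :=
    integral_sub hint_M.integrableOn hint_pσ.integrableOn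
  -- step 3 : ∫_A birkM = ∫ p
  have step3 : ∫ θ in A, birkM σ f N θ ∂μ = ∫ θ, p θ ∂μ := by
    have h1 : ∫ θ in A, birkM σ f N θ ∂μ = ∫ θ in A, p θ ∂μ := by
      refine setIntegral_congr_fun hAmeas ?_
      intro θ hθ
      exact (max_eq_left (le_of_lt hθ)).symm
    have h2 : ∫ θ in Aᶜ, p θ ∂μ = 0 := by
      rw [show (0 : ℝ) = ∫ (_ : Θ) in Aᶜ, (0 : ℝ) ∂μ by simp]
      refine setIntegral_congr_fun hAmeas.compl ?_
      intro θ hθ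
      simp only [hA, Set.mem_compl_iff, Set.mem_setOf_eq, not_lt] at hθ
      exact max_eq_right hθ
    have h3 := integral_add_compl hAmeas hint_p
    rw [h1]
    linarith
  -- step 4 : ∫_A p∘σ ≤ ∫ p∘σ = ∫ p
  have step4 : ∫ θ in A, p (σ θ) ∂μ ≤ ∫ θ, p θ ∂μ := by
    have h1 : ∫ θ in A, p (σ θ) ∂μ ≤ ∫ θ, p (σ θ) ∂μ :=
      setIntegral_le_integral hint_pσ (Eventually.of_forall fun θ => le_max_right _ _)
    have h2 : ∫ θ, p (σ θ) ∂μ = ∫ θ, p θ ∂μ := by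
      rw [← MeasureTheory.integral_map hσ.aemeasurable hpmeas.aestronglyMeasurable, mp.map_eq]
    linarith
  linarith

end MaxErg
end Birkhoff

section B3
set_option linter.unusedSectionVars false
variable {Θ : Type*} [MeasurableSpace Θ] {σ : Θ → Θ} {f : Θ → ℝ}
  {μ : MeasureTheory.Measure Θ} [IsProbabilityMeasure μ]

lemma abs_birkS_div_le {K : ℝ} (hK0 : 0 ≤ K) (hK : ∀ θ, |f θ| ≤ K) (n : ℕ) (θ : Θ) :
    |birkS σ f n θ / n| ≤ K := by
  cases n with
  | zero => simpa [birkS] using hK0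
  | succ m =>
    rw [abs_div, abs_of_nonneg (by positivity : (0:ℝ) ≤ ((m+1 : ℕ) : ℝ))]
    rw [div_le_iff₀ (by positivity)]
    exact (abs_birkS_le hK (m+1) θ).trans (by rw [mul_comm])

lemma birkL_comp {K : ℝ} (hK0 : 0 ≤ K) (hK : ∀ θ, |f θ| ≤ K) (θ : Θ) :
    liminf (fun n : ℕ => birkS σ f n (σ θ) / n) atTop
      = liminf (fun n : ℕ => birkS σ f n θ / n) atTop := by
  refine liminf_eq_liminf_of_sub_tendsto _ _ K (abs_birkS_div_le hK0 hK · (σ θ))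
    (abs_birkS_div_le hK0 hK · θ) ?_
  have hb : ∀ n : ℕ, ‖birkS σ f n (σ θ) / n - birkS σ f n θ / n‖ ≤ 2 * K / n := by
    intro n
    rw [div_sub_div_same]
    have hnum : birkS σ f n (σ θ) - birkS σ f n θ = f (σ^[n] θ) - f θ := by
      have h1 := birkS_succ (σ := σ) (f := f) n θ
      have h2 : birkS σ f (n + 1) θ = birkS σ f n θ + f (σ^[n] θ) := by
        unfold birkS; rw [Finset.sum_range_succ]
      rw [h2] at h1; linarith
    rw [hnum]
    cases n with
    | zero => simp
    | succ m =>
      rw [Real.norm_eq_abs, abs_div, abs_of_nonneg (by positivity : (0:ℝ) ≤ ((m+1 : ℕ) : ℝ))]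
      gcongr
      calc |f (σ^[m+1] θ) - f θ| ≤ |f (σ^[m+1] θ)| + |f θ| := abs_sub _ _
        _ ≤ 2 * K := by linarith [hK (σ^[m+1] θ), hK θ]
  have h0 : Tendsto (fun n : ℕ => 2 * K / n) atTop (𝓝 0) :=
    tendsto_const_div_atTop_nhds_zero_nat (2 * K)
  exact squeeze_zero_norm hb h0

/-- One half of Birkhoff's theorem: a.e., the liminf of averages is `≥ ∫ f`. -/
lemma birkhoff_liminf_ge (hσ : Measurable σ) (mp : MeasurePreserving σ μ μ)
    (herg : ∀ E : Set Θ, MeasurableSet E → σ ⁻¹' E = E → μ E = 0 ∨ μ Eᶜ = 0)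
    (hf : Measurable f) {K : ℝ} (hK0 : 0 ≤ K) (hK : ∀ θ, |f θ| ≤ K) :
    ∀ᵐ θ ∂μ, ∫ x, f x ∂μ ≤ liminf (fun n : ℕ => birkS σ f n θ / n) atTop := by
  set γ := ∫ x, f x ∂μ with hγ
  set L : Θ → ℝ := fun θ => liminf (fun n : ℕ => birkS σ f n θ / n) atTop with hL
  have hLmeas : Measurable L :=
    Measurable.liminf fun n => (birkS_meas hσ hf n).div_const _
  -- main step : for c < γ, {L < c} is null
  have key : ∀ c : ℝ, c < γ → μ {θ | L θ < c} = 0 := by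
    intro c hc
    set E := {θ | L θ < c} with hE
    have hEmeas : MeasurableSet E := measurableSet_lt hLmeas measurable_const
    have hEinv : σ ⁻¹' E = E := by
      ext θ
      simp only [hE, Set.mem_preimage, Set.mem_setOf_eq, hL]
      rw [birkL_comp hK0 hK θ]
    rcases herg E hEmeas hEinv with h | h
    · exact h
    · exfalso
      -- maximal ergodic argument with f' = c - f
      set f' : Θ → ℝ := fun θ => c - f θ with hf'
      have hf'meas : Measurable f' := measurable_const.sub hf
      have hf'bdd : ∀ θ, |f' θ| ≤ |c| + K := by
        intro θ
        calc |f' θ| ≤ |c| + |f θ| := abs_sub _ _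
          _ ≤ |c| + K := by linarith [hK θ]
      have hint_f' : Integrable f' μ := integrable_of_bdd hf'meas hf'bdd
      set D : ℕ → Set Θ := fun N => {θ | 0 < birkM σ f' N θ} with hD
      have hDmeas : ∀ N, MeasurableSet (D N) :=
        fun N => measurableSet_lt measurable_const (birkM_meas hσ hf'meas N)
      have hDmono : Monotone D := by
        intro N N' hNN' θ hθ
        exact lt_of_lt_of_le hθ (birkM_mono' hNN' θ)
      have htend : Tendsto (fun N => ∫ θ in D N, f' θ ∂μ) atTop
          (𝓝 (∫ θ in ⋃ N, D N, f' θ ∂μ)) :=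
        tendsto_setIntegral_of_monotone hDmeas hDmono hint_f'.integrableOn
      have hDpos : 0 ≤ ∫ θ in ⋃ N, D N, f' θ ∂μ :=
        ge_of_tendsto htend (Eventually.of_forall fun N =>
          maximal_ergodic hσ mp hf'meas hf'bdd N)
      -- E ⊆ ⋃ N, D N
      have hED : E ⊆ ⋃ N, D N := by
        intro θ hθ
        have hbdd : IsBoundedUnder (· ≤ ·) atTop (fun n : ℕ => birkS σ f n θ / n) :=
          isBoundedUnder_of ⟨K, fun n => (abs_le.1 (abs_birkS_div_le hK0 hK n θ)).2⟩
        have hfreq : ∃ᶠ n in atTop, birkS σ f n θ / n < c :=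
          frequently_lt_of_liminf_lt hbdd.isCoboundedUnder_ge hθ
        obtain ⟨n, hn1, hn2⟩ := (hfreq.and_eventually (eventually_ge_atTop 1)).exists
        have hnpos : (0:ℝ) < n := by exact_mod_cast hn2
        have hS : birkS σ f n θ < n * c := by
          rw [div_lt_iff₀ hnpos] at hn1; linarith [hn1]
        have hSf' : birkS σ f' n θ = n * c - birkS σ f n θ := by
          unfold f'
          unfold birkS
          rw [Finset.sum_sub_distrib, Finset.sum_const, Finset.card_range]
          simp [nsmul_eq_mul]
        refine Set.mem_iUnion.2 ⟨n - 1, ?_⟩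
        have hn' : n - 1 + 1 = n := Nat.succ_pred_eq_of_pos hn2
        show 0 < birkM σ f' (n - 1) θ
        calc (0:ℝ) < birkS σ f' n θ := by rw [hSf']; linarith
          _ = birkS σ f' (n - 1 + 1) θ := by rw [hn']
          _ ≤ birkM σ f' (n - 1) θ := birkS_le_birkM le_rfl θ
      -- conclude
      have hDc : μ (⋃ N, D N)ᶜ = 0 :=
        measure_mono_null (Set.compl_subset_compl.2 hED) h
      have hfull : ∫ θ in ⋃ N, D N, f' θ ∂μ = ∫ θ, f' θ ∂μ := by
        have h3 := integral_add_compl (MeasurableSet.iUnion hDmeas) hint_f'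
        have h4 : ∫ θ in (⋃ N, D N)ᶜ, f' θ ∂μ = 0 := by
          rw [MeasureTheory.Measure.restrict_eq_zero.2 hDc, integral_zero_measure]
        linarith
      have hintval : ∫ θ, f' θ ∂μ = c - γ := by
        rw [hf']
        rw [integral_sub (integrable_const c) (integrable_of_bdd hf hK)]
        simp [hγ]
      rw [hfull, hintval] at hDpos
      linarith
  -- assemble : μ {L < γ} = 0
  have hbad : μ {θ | L θ < γ} = 0 := by
    set s : ℚ → Set Θ := fun q => {θ | L θ < (q:ℝ) ∧ (q:ℝ) < γ} with hs
    have hsnull : ∀ q : ℚ, μ (s q) = 0 := by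
      intro q
      by_cases hq : (q:ℝ) < γ
      · exact measure_mono_null (fun θ hθ => hθ.1) (key q hq)
      · have : s q = ∅ := by
          ext θ; simp only [hs, Set.mem_setOf_eq, Set.mem_empty_iff_false, iff_false]
          tauto
        simp [this]
    have hsub : {θ | L θ < γ} ⊆ ⋃ q : ℚ, s q := by
      intro θ hθ
      obtain ⟨q, hq1, hq2⟩ := exists_rat_btwn (show L θ < γ from hθ)
      exact Set.mem_iUnion.2 ⟨q, hq1, hq2⟩
    exact measure_mono_null hsub (measure_iUnion_null hsnull)
  rw [ae_iff]
  convert hbad using 2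
  ext θ
  simp [not_le, hL]

/-- Birkhoff's pointwise ergodic theorem for bounded measurable functions. -/
lemma birkhoff_bounded (hσ : Measurable σ) (mp : MeasurePreserving σ μ μ)
    (herg : ∀ E : Set Θ, MeasurableSet E → σ ⁻¹' E = E → μ E = 0 ∨ μ Eᶜ = 0)
    (hf : Measurable f) {K : ℝ} (hK0 : 0 ≤ K) (hK : ∀ θ, |f θ| ≤ K) :
    ∀ᵐ θ ∂μ, Tendsto (fun n : ℕ => birkS σ f n θ / n) atTop (𝓝 (∫ x, f x ∂μ)) := by
  have h1 := birkhoff_liminf_ge hσ mp herg hf hK0 hK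
  have h2 := birkhoff_liminf_ge (f := fun θ => -f θ) hσ mp herg hf.neg hK0
    (fun θ => by simpa using hK θ)
  filter_upwards [h1, h2] with θ hθ1 hθ2
  have hneg : ∀ n : ℕ, birkS σ (fun x => -f x) n θ / n = -(birkS σ f n θ / n) := by
    intro n
    unfold birkS
    rw [Finset.sum_neg_distrib]
    ring
  have hbddA : IsBoundedUnder (· ≤ ·) atTop (fun n : ℕ => birkS σ f n θ / n) :=
    isBoundedUnder_of ⟨K, fun n => (abs_le.1 (abs_birkS_div_le hK0 hK n θ)).2⟩
  have hbddB : IsBoundedUnder (· ≥ ·) atTop (fun n : ℕ => birkS σ f n θ / n) :=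
    isBoundedUnder_of ⟨-K, fun n => (abs_le.1 (abs_birkS_div_le hK0 hK n θ)).1⟩
  have hls : limsup (fun n : ℕ => birkS σ f n θ / n) atTop ≤ ∫ x, f x ∂μ := by
    have hmap : -(limsup (fun n : ℕ => birkS σ f n θ / n) atTop)
        = liminf (fun n : ℕ => -(birkS σ f n θ / n)) atTop := by
      exact Antitone.map_limsup_of_continuousAt (f := fun x : ℝ => -x)
        (fun a b hab => neg_le_neg hab) _ (continuous_neg.continuousAt)
        hbddA hbddB.isCoboundedUnder_le
    have h2' : ∫ x, -f x ∂μ ≤ liminf (fun n : ℕ => -(birkS σ f n θ / n)) atTop := by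
      refine le_trans (le_of_eq ?_) (le_trans hθ2 (le_of_eq ?_))
      · rfl
      · exact liminf_congr (Eventually.of_forall fun n => hneg n)
    rw [← hmap] at h2'
    rw [integral_neg] at h2'
    linarith
  exact tendsto_of_le_liminf_of_limsup_le hθ1 hls hbddA hbddB

end B3

namespace Setting

set_option linter.unusedSectionVars false

variable {Θ : Type*} [MeasurableSpace Θ] (S : Setting Θ)

lemma h_contOn : ContinuousOn S.h (Set.Ici 0) :=
  fun x hx => (S.h_hasDeriv x hx).continuousWithinAt

/-- Concavity through origin: `(h y / y) * x ≤ h x` for `0 ≤ x ≤ y`. -/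
lemma h_ge_slope {x y : ℝ} (hx : 0 ≤ x) (hxy : x ≤ y) (hy : 0 < y) :
    (S.h y / y) * x ≤ S.h x := by
  have hcc := S.h_strictConcave.concaveOn
  have hxy' : x / y ≤ 1 := div_le_one_of_le₀ hxy hy.le
  have h0 : (0:ℝ) ∈ Set.Ici (0:ℝ) := Set.mem_Ici.2 le_rfl
  have hyI : y ∈ Set.Ici (0:ℝ) := Set.mem_Ici.2 hy.le
  have := hcc.2 h0 hyI (by linarith : (0:ℝ) ≤ 1 - x / y)
    (by positivity : (0:ℝ) ≤ x / y) (by ring)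
  simp only [smul_eq_mul, mul_zero, zero_add, S.h_zero] at this
  have hxx : x / y * y = x := div_mul_cancel₀ x hy.ne'
  rw [hxx] at this
  calc (S.h y / y) * x = x / y * S.h y := by ring
    _ ≤ S.h x := this

lemma slope_tendsto : Tendsto (fun y => S.h y / y) (𝓝[>] (0:ℝ)) (𝓝 1) := by
  have h := (hasDerivWithinAt_iff_tendsto_slope).1 (S.h_hasDeriv 0 (Set.mem_Ici.2 le_rfl))
  rw [S.h'_zero] at h
  have hset : Set.Ici (0:ℝ) \ {0} = Set.Ioi 0 := by
    ext y; simp only [Set.mem_diff, Set.mem_Ici, Set.mem_singleton_iff, Set.mem_Ioi]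
    constructor
    · rintro ⟨h1, h2⟩; exact lt_of_le_of_ne h1 (Ne.symm h2)
    · intro h1; exact ⟨h1.le, h1.ne'⟩
  rw [hset] at h
  refine h.congr' ?_
  filter_upwards [self_mem_nhdsWithin] with y hy
  have hy' : (y:ℝ) ≠ 0 := (Set.mem_Ioi.1 hy).ne'
  simp [slope_def_field, S.h_zero]

lemma h_le_id {x : ℝ} (hx : 0 ≤ x) : S.h x ≤ x := by
  rcases eq_or_lt_of_le hx with h | hxpos
  · rw [← h, S.h_zero]
  have hle : S.h x / x ≤ 1 := by
    refine ge_of_tendsto S.slope_tendsto ?_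
    filter_upwards [Ioo_mem_nhdsGT_of_mem (Set.mem_Ico.2 ⟨le_rfl, hxpos⟩)] with y hy
    exact (le_div_iff₀ hy.1).2 (S.h_ge_slope hy.1.le hy.2.le hxpos)
  rw [div_le_one hxpos] at hle
  exact hle

lemma h_strictMono : StrictMonoOn S.h (Set.Ici 0) := by
  refine strictMonoOn_of_deriv_pos (convex_Ici 0) S.h_contOn ?_
  intro x hx
  rw [interior_Ici] at hx
  have hd : HasDerivAt S.h (S.h' x) x :=
    (S.h_hasDeriv x (Set.mem_Ici.2 (le_of_lt hx))).hasDerivAt (Ici_mem_nhds hx)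
  rw [hd.deriv]
  exact S.h'_pos x hx

lemma h_nonneg {x : ℝ} (hx : 0 ≤ x) : 0 ≤ S.h x := by
  rcases eq_or_lt_of_le hx with h | hxpos
  · rw [← h, S.h_zero]
  · rw [← S.h_zero]
    exact (S.h_strictMono (Set.mem_Ici.2 le_rfl) hxpos.le hxpos).le

lemma h_pos {x : ℝ} (hx : 0 < x) : 0 < S.h x := by
  rw [← S.h_zero]
  exact S.h_strictMono (Set.mem_Ici.2 le_rfl) hx.le hx

lemma exists_delta {M c : ℝ} (hM : 0 < M) (hc : c < 1) :
    ∃ δ : ℝ, 0 < δ ∧ δ ≤ M ∧ ∀ x, 0 < x → x ≤ M → c * min x δ ≤ S.h x := by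
  have hev : ∀ᶠ y in 𝓝[>] (0:ℝ), c < S.h y / y ∧ y ∈ Set.Ioc 0 M := by
    refine (S.slope_tendsto.eventually (eventually_gt_nhds hc)).and ?_
    exact Ioc_mem_nhdsGT_of_mem (Set.mem_Ico.2 ⟨le_rfl, hM⟩)
  obtain ⟨δ, hδ1, hδ2⟩ := hev.exists
  refine ⟨δ, hδ2.1, hδ2.2, ?_⟩
  intro x hx hxM
  rcases le_total x δ with hxd | hxd
  · rw [min_eq_left hxd]
    have := S.h_ge_slope hx.le hxd hδ2.1
    calc c * x ≤ (S.h δ / δ) * x := by nlinarith [hδ1]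
      _ ≤ S.h x := S.h_ge_slope hx.le hxd hδ2.1
  · rw [min_eq_right hxd]
    have h1 : c * δ ≤ S.h δ := by
      have := hδ1; rw [lt_div_iff₀ hδ2.1] at this; linarith
    rcases eq_or_lt_of_le hxd with he | hlt
    · rw [← he]; exact h1
    · exact h1.trans (S.h_strictMono hδ2.1.le (hδ2.1.trans hlt).le hlt).le

end Setting

namespace Setting

set_option linter.unusedSectionVars false

variable {Θ : Type*} [MeasurableSpace Θ] (S : Setting Θ)

lemma fn_nonneg (t : ℝ) (n : ℕ) (θ : Θ) {x : ℝ} (hx : 0 ≤ x) : 0 ≤ S.fn t n θ x := by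
  induction n with
  | zero => exact hx
  | succ n ih =>
    show 0 ≤ S.f t (S.T^[n] θ) (S.fn t n θ x)
    unfold f
    have := S.h_nonneg ih
    have := (S.g_pos (S.T^[n] θ)).le
    positivity

lemma fn_le_prod (t : ℝ) (n : ℕ) (θ : Θ) {x : ℝ} (hx : 0 ≤ x) :
    S.fn t n θ x ≤ x * ∏ i ∈ Finset.range n, (Real.exp (-t) * S.g (S.T^[i] θ)) := by
  induction n with
  | zero => simp [fn]
  | succ n ih =>
    rw [Finset.prod_range_succ]
    show S.f t (S.T^[n] θ) (S.fn t n θ x) ≤ _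
    unfold f
    have h1 : S.h (S.fn t n θ x) ≤ S.fn t n θ x := S.h_le_id (S.fn_nonneg t n θ hx)
    have h2 : (0:ℝ) < Real.exp (-t) * S.g (S.T^[n] θ) := by
      have := S.g_pos (S.T^[n] θ); positivity
    calc Real.exp (-t) * S.g (S.T^[n] θ) * S.h (S.fn t n θ x)
        ≤ Real.exp (-t) * S.g (S.T^[n] θ) * S.fn t n θ x := by nlinarith
      _ ≤ Real.exp (-t) * S.g (S.T^[n] θ) *
          (x * ∏ i ∈ Finset.range n, (Real.exp (-t) * S.g (S.T^[i] θ))) := by nlinarith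
      _ = x * ((∏ i ∈ Finset.range n, (Real.exp (-t) * S.g (S.T^[i] θ))) *
          (Real.exp (-t) * S.g (S.T^[n] θ))) := by ring

lemma fn_M_mem {t M : ℝ} (hM : 0 < M) (hMf : ∀ θ, S.f t θ M < M) (n : ℕ) (θ : Θ) :
    0 < S.fn t n θ M ∧ S.fn t n θ M ≤ M := by
  induction n with
  | zero => exact ⟨hM, le_rfl⟩
  | succ n ih =>
    obtain ⟨h1, h2⟩ := ih
    constructor
    · show 0 < S.f t (S.T^[n] θ) (S.fn t n θ M)
      unfold f
      have := S.h_pos h1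
      have := S.g_pos (S.T^[n] θ)
      positivity
    · show S.f t (S.T^[n] θ) (S.fn t n θ M) ≤ M
      have hh : S.h (S.fn t n θ M) ≤ S.h M := by
        rcases eq_or_lt_of_le h2 with he | hlt
        · rw [he]
        · exact (S.h_strictMono h1.le (hM.le) hlt).le
      have hgpos := S.g_pos (S.T^[n] θ)
      have : S.f t (S.T^[n] θ) (S.fn t n θ M) ≤ S.f t (S.T^[n] θ) M := by
        unfold f
        rw [mul_assoc, mul_assoc]
        refine mul_le_mul_of_nonneg_left ?_ (Real.exp_pos (-t)).le
        exact mul_le_mul_of_nonneg_left hh hgpos.le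
      exact this.trans (hMf (S.T^[n] θ)).le

lemma fn_lower {t M δ c : ℝ} (hM : 0 < M) (hMf : ∀ θ, S.f t θ M < M)
    (hδ : 0 < δ) (hδM : δ ≤ M) (hc : 0 < c)
    (hcb : ∀ x, 0 < x → x ≤ M → c * min x δ ≤ S.h x) (n : ℕ) (θ : Θ) :
    ∃ m ≤ n, min δ M * ∏ i ∈ Finset.Ico m n, (Real.exp (-t) * c * S.g (S.T^[i] θ))
      ≤ S.fn t n θ M := by
  induction n with
  | zero =>
    refine ⟨0, le_rfl, ?_⟩
    simp only [Finset.Ico_self, Finset.prod_empty, mul_one]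
    show min δ M ≤ M
    exact (min_le_left δ M).trans hδM
  | succ n ih =>
    obtain ⟨m, hm, hIH⟩ := ih
    obtain ⟨hpos, hle⟩ := S.fn_M_mem hM hMf n θ
    have hgpos := S.g_pos (S.T^[n] θ)
    have hepos := Real.exp_pos (-t)
    have hstep : Real.exp (-t) * S.g (S.T^[n] θ) * (c * min (S.fn t n θ M) δ)
        ≤ S.fn t (n + 1) θ M := by
      show _ ≤ S.f t (S.T^[n] θ) (S.fn t n θ M)
      unfold f
      rw [mul_assoc, mul_assoc]
      refine mul_le_mul_of_nonneg_left ?_ (Real.exp_pos (-t)).le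
      exact mul_le_mul_of_nonneg_left (hcb (S.fn t n θ M) hpos hle) hgpos.le
    rcases le_total δ (S.fn t n θ M) with hxd | hxd
    · refine ⟨n, Nat.le_succ n, ?_⟩
      rw [Finset.prod_Ico_succ_top le_rfl, Finset.Ico_self, Finset.prod_empty, one_mul]
      rw [min_eq_right hxd] at hstep
      have hmin : min δ M = δ := min_eq_left hδM
      rw [hmin]
      nlinarith [hstep]
    · refine ⟨m, hm.trans (Nat.le_succ n), ?_⟩
      rw [Finset.prod_Ico_succ_top hm]
      rw [min_eq_left hxd] at hstep
      have hprodpos : (0:ℝ) ≤ ∏ i ∈ Finset.Ico m n, (Real.exp (-t) * c * S.g (S.T^[i] θ)) :=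
        (Finset.prod_pos fun i _ => by have := S.g_pos (S.T^[i] θ); positivity).le
      calc min δ M * ((∏ i ∈ Finset.Ico m n, (Real.exp (-t) * c * S.g (S.T^[i] θ))) *
            (Real.exp (-t) * c * S.g (S.T^[n] θ)))
          = (min δ M * ∏ i ∈ Finset.Ico m n, (Real.exp (-t) * c * S.g (S.T^[i] θ))) *
            (Real.exp (-t) * c * S.g (S.T^[n] θ)) := by ring
        _ ≤ S.fn t n θ M * (Real.exp (-t) * c * S.g (S.T^[n] θ)) :=
            mul_le_mul_of_nonneg_right hIH (by positivity)
        _ = Real.exp (-t) * S.g (S.T^[n] θ) * (c * S.fn t n θ M) := by ring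
        _ ≤ S.fn t (n + 1) θ M := hstep

end Setting

namespace Setting

set_option linter.unusedSectionVars false

variable {Θ : Type*} [MeasurableSpace Θ] (S : Setting Θ)

lemma iter_comm (i n : ℕ) (hin : i ≤ n) (θ : Θ) :
    S.T^[i] (S.Tinv^[n] θ) = S.Tinv^[n - i] θ := by
  conv_lhs => rw [show n = i + (n - i) from (Nat.add_sub_cancel' hin).symm]
  rw [Function.iterate_add_apply]
  exact S.right_inv.iterate i _

lemma sum_Ico_reindex (F : Θ → ℝ) (m n : ℕ) (hm : m ≤ n) (θ : Θ) :
    ∑ i ∈ Finset.Ico m n, F (S.T^[i] (S.Tinv^[n] θ))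
      = ∑ k ∈ Finset.range (n - m), F (S.Tinv^[k + 1] θ) := by
  have h1 : ∀ i ∈ Finset.Ico m n, F (S.T^[i] (S.Tinv^[n] θ)) = F (S.Tinv^[n - i] θ) := by
    intro i hi
    rw [S.iter_comm i n (le_of_lt (Finset.mem_Ico.1 hi).2)]
  rw [Finset.sum_congr rfl h1, Finset.sum_Ico_eq_sum_range]
  have h2 : ∀ k ∈ Finset.range (n - m), F (S.Tinv^[n - (m + k)] θ) = F (S.Tinv^[n - m - k] θ) := by
    intro k hk; congr 2; omega
  rw [Finset.sum_congr rfl h2]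
  rw [← Finset.sum_range_reflect (fun k => F (S.Tinv^[k + 1] θ)) (n - m)]
  refine Finset.sum_congr rfl fun j hj => ?_
  have hj' := Finset.mem_range.1 hj
  congr 2
  omega

lemma psi_le (t M : ℝ) (hM : 0 ≤ M) (n : ℕ) (θ : Θ) :
    S.ψ t M n θ
      ≤ M * Real.exp ((∑ k ∈ Finset.range n, Real.log (S.g (S.Tinv^[k + 1] θ))) - t * n) := by
  have h1 := S.fn_le_prod t n (S.Tinv^[n] θ) hM
  refine le_trans h1 (le_of_eq ?_)
  congr 1
  have he : ∀ i ∈ Finset.range n, Real.exp (-t) * S.g (S.T^[i] (S.Tinv^[n] θ))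
      = Real.exp (-t + Real.log (S.g (S.T^[i] (S.Tinv^[n] θ)))) := by
    intro i _
    rw [Real.exp_add, Real.exp_log (S.g_pos _)]
  rw [Finset.prod_congr rfl he, ← Real.exp_sum]
  congr 1
  rw [Finset.sum_add_distrib, Finset.sum_const, Finset.card_range]
  have h2 : ∑ i ∈ Finset.range n, Real.log (S.g (S.T^[i] (S.Tinv^[n] θ)))
      = ∑ k ∈ Finset.range n, Real.log (S.g (S.Tinv^[k + 1] θ)) := by
    rw [Finset.range_eq_Ico]
    have := S.sum_Ico_reindex (fun x => Real.log (S.g x)) 0 n (Nat.zero_le n) θ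
    simpa using this
  rw [h2]
  simp [nsmul_eq_mul]
  ring

lemma prod_Ico_eq_exp (t ε : ℝ) (m n : ℕ) (hm : m ≤ n) (θ : Θ) :
    ∏ i ∈ Finset.Ico m n, (Real.exp (-t) * Real.exp (-ε) * S.g (S.T^[i] (S.Tinv^[n] θ)))
      = Real.exp ((∑ k ∈ Finset.range (n - m), Real.log (S.g (S.Tinv^[k + 1] θ)))
          - (t + ε) * ((n - m : ℕ) : ℝ)) := by
  have he : ∀ i ∈ Finset.Ico m n, Real.exp (-t) * Real.exp (-ε) * S.g (S.T^[i] (S.Tinv^[n] θ))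
      = Real.exp (-(t + ε) + Real.log (S.g (S.T^[i] (S.Tinv^[n] θ)))) := by
    intro i _
    rw [Real.exp_add, Real.exp_log (S.g_pos _), show -(t + ε) = -t + -ε by ring,
      Real.exp_add]
  rw [Finset.prod_congr rfl he, ← Real.exp_sum]
  congr 1
  rw [Finset.sum_add_distrib, Finset.sum_const, Nat.card_Ico]
  rw [S.sum_Ico_reindex (fun x => Real.log (S.g x)) m n hm θ]
  simp [nsmul_eq_mul]
  ring

set_option maxHeartbeats 1000000 in
/-- If the backwards Birkhoff averages converge to `ℓ` and `ℓ < t`, then `φ_t(θ) = 0`. -/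
lemma phi_eq_zero_of_gt {θ : Θ} {ℓ : ℝ}
    (hconv : Tendsto (fun n : ℕ => S.Γn n θ) atTop (𝓝 ℓ)) {t M : ℝ} (hM : 0 < M)
    (ht : ℓ < t) : S.φ t M θ = 0 := by
  have hpsi_nonneg : ∀ n : ℕ, 0 ≤ S.ψ t M (n + 1) θ :=
    fun n => S.fn_nonneg t (n + 1) _ hM.le
  have hphi_nonneg : 0 ≤ S.φ t M θ := Real.iInf_nonneg hpsi_nonneg
  have hub : ∀ n : ℕ, S.φ t M θ ≤ M * Real.exp (((n + 1 : ℕ) : ℝ) * (S.Γn (n + 1) θ - t)) := by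
    intro n
    have hbdd : BddBelow (Set.range fun n : ℕ => S.ψ t M (n + 1) θ) := by
      refine ⟨0, ?_⟩
      rintro x ⟨n', rfl⟩
      exact hpsi_nonneg n'
    have h1 : S.φ t M θ ≤ S.ψ t M (n + 1) θ := ciInf_le hbdd n
    refine h1.trans ((S.psi_le t M hM.le (n + 1) θ).trans (le_of_eq ?_))
    have hn1 : ((n + 1 : ℕ) : ℝ) ≠ 0 := by positivity
    have hΓ : S.Γn (n + 1) θ
        = (∑ k ∈ Finset.range (n + 1), Real.log (S.g (S.Tinv^[k + 1] θ)))
          / ((n + 1 : ℕ) : ℝ) := rfl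
    have harg : (∑ k ∈ Finset.range (n + 1), Real.log (S.g (S.Tinv^[k + 1] θ)))
        - t * ((n + 1 : ℕ) : ℝ) = ((n + 1 : ℕ) : ℝ) * (S.Γn (n + 1) θ - t) := by
      rw [hΓ]; field_simp
    rw [harg]
  have htend : Tendsto (fun n : ℕ => M * Real.exp (((n + 1 : ℕ) : ℝ) * (S.Γn (n + 1) θ - t)))
      atTop (𝓝 0) := by
    have h1 : Tendsto (fun n : ℕ => ((n + 1 : ℕ) : ℝ)) atTop atTop :=
      tendsto_natCast_atTop_atTop.comp (tendsto_add_atTop_nat 1)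
    have h2 : Tendsto (fun n : ℕ => S.Γn (n + 1) θ - t) atTop (𝓝 (ℓ - t)) :=
      ((hconv.comp (tendsto_add_atTop_nat 1)).sub_const t)
    have h3 := Tendsto.atTop_mul_neg (by linarith : ℓ - t < 0) h1 h2
    have h4 := Real.tendsto_exp_atBot.comp h3
    have h5 := h4.const_mul M
    rw [mul_zero] at h5
    exact h5
  have hle : S.φ t M θ ≤ 0 := ge_of_tendsto htend (Eventually.of_forall hub)
  linarith

/-- If the backwards Birkhoff averages converge to `ℓ` and `t < ℓ`, then `φ_t(θ) > 0`. -/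
lemma phi_pos_of_lt {θ : Θ} {ℓ : ℝ}
    (hconv : Tendsto (fun n : ℕ => S.Γn n θ) atTop (𝓝 ℓ)) {t M : ℝ} (hM : 0 < M)
    (hMf : ∀ θ', S.f t θ' M < M) (ht : t < ℓ) : 0 < S.φ t M θ := by
  set B : ℕ → ℝ := fun n => ∑ k ∈ Finset.range n, Real.log (S.g (S.Tinv^[k + 1] θ)) with hB
  set ε := (ℓ - t) / 2 with hε
  have hεpos : 0 < ε := by simp only [hε]; linarith
  have hc1 : Real.exp (-ε) < 1 := Real.exp_lt_one_iff.2 (by linarith)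
  obtain ⟨δ, hδpos, hδM, hδb⟩ := S.exists_delta hM hc1
  -- the exponent sequence v r := B r - (t + ε) r tends to +∞
  set v : ℕ → ℝ := fun r => B r - (t + ε) * r with hv
  have hvtop : Tendsto v atTop atTop := by
    have h1 : Tendsto (fun r : ℕ => (r : ℝ) * (S.Γn r θ - (t + ε))) atTop atTop := by
      refine Tendsto.atTop_mul_pos (by simp only [hε]; linarith : (0:ℝ) < ℓ - (t + ε))
        tendsto_natCast_atTop_atTop (hconv.sub_const (t + ε))
    refine h1.congr' ?_
    filter_upwards [eventually_ge_atTop 1] with r hr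
    have hrpos : ((r : ℕ) : ℝ) ≠ 0 := Nat.cast_ne_zero.2 (by omega)
    have hΓ : S.Γn r θ = B r / (r : ℝ) := rfl
    simp only [hv, hΓ]
    field_simp
  obtain ⟨R, hR⟩ := eventually_atTop.1 (hvtop.eventually_ge_atTop 0)
  set ρ := min 1 ((Finset.range (R + 1)).inf' Finset.nonempty_range_add_one
      fun r => Real.exp (v r)) with hρ
  have hρpos : 0 < ρ := by
    refine lt_min one_pos ?_
    rw [Finset.lt_inf'_iff]
    intro r _
    exact Real.exp_pos _
  have hρle : ∀ r, ρ ≤ Real.exp (v r) := by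
    intro r
    rcases le_or_gt r R with hrR | hrR
    · exact (min_le_right _ _).trans
        (Finset.inf'_le _ (Finset.mem_range.2 (Nat.lt_succ_of_le hrR)))
    · exact (min_le_left _ _).trans (Real.one_le_exp (hR r hrR.le))
  have hlow : ∀ n : ℕ, min δ M * ρ ≤ S.ψ t M n θ := by
    intro n
    obtain ⟨m, hm, hlb⟩ := S.fn_lower hM hMf hδpos hδM (Real.exp_pos (-ε)) hδb n (S.Tinv^[n] θ)
    rw [S.prod_Ico_eq_exp t ε m n hm θ] at hlb
    have heq : (∑ k ∈ Finset.range (n - m), Real.log (S.g (S.Tinv^[k + 1] θ)))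
        - (t + ε) * ((n - m : ℕ) : ℝ) = v (n - m) := rfl
    rw [heq] at hlb
    refine le_trans ?_ hlb
    have hminpos : 0 < min δ M := lt_min hδpos hM
    exact mul_le_mul_of_nonneg_left (hρle (n - m)) hminpos.le
  have hpos : 0 < min δ M * ρ := by
    have := lt_min hδpos hM
    positivity
  exact lt_of_lt_of_le hpos (le_ciInf fun n => hlow (n + 1))

/-- If the backwards averages converge to `ℓ`, then the critical parameter equals `ℓ`. -/
lemma tc_eq_of_tendsto (M : ℝ → ℝ) (hM : ∀ t, 0 < M t) (hMf : ∀ t θ', S.f t θ' (M t) < M t)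
    {θ : Θ} {ℓ : ℝ} (hconv : Tendsto (fun n : ℕ => S.Γn n θ) atTop (𝓝 ℓ)) :
    S.tc M θ = ℓ := by
  have hsub1 : Set.Ioi ℓ ⊆ {t | S.φ t (M t) θ = 0} :=
    fun t ht => S.phi_eq_zero_of_gt hconv (hM t) ht
  have hsub2 : {t | S.φ t (M t) θ = 0} ⊆ Set.Ici ℓ := by
    intro t ht
    by_contra hlt
    rw [Set.mem_Ici, not_le] at hlt
    exact (S.phi_pos_of_lt hconv (hM t) (hMf t) hlt).ne' ht
  unfold tc
  refine le_antisymm ?_ ?_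
  · calc sInf {t | S.φ t (M t) θ = 0} ≤ sInf (Set.Ioi ℓ) :=
        csInf_le_csInf ⟨ℓ, fun z hz => hsub2 hz⟩ ⟨ℓ + 1, by simp⟩ hsub1
      _ = ℓ := csInf_Ioi
  · exact le_csInf ⟨ℓ + 1, hsub1 (by simp : ℓ + 1 ∈ Set.Ioi ℓ)⟩ fun z hz => hsub2 hz

end Setting

namespace Setting

set_option linter.unusedSectionVars false

variable {Θ : Type*} [MeasurableSpace Θ] (S : Setting Θ)

lemma Γn_eq_birkS (n : ℕ) (θ : Θ) :
    S.Γn n θ = birkS S.Tinv (fun x => Real.log (S.g (S.Tinv x))) n θ / n := by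
  unfold Γn birkS
  congr 1
  refine Finset.sum_congr rfl fun k _ => ?_
  rw [Function.iterate_succ_apply']

end Setting

theorem stmt14' {Θ : Type*} [MeasurableSpace Θ] (S : Setting Θ)
    (hg : ∃ c : ℝ, 0 < c ∧ ∀ θ, c ≤ S.g θ)
    (M : ℝ → ℝ) (hM : ∀ t, 0 < M t) (hMf : ∀ t θ, S.f t θ (M t) < M t)
    (t : ℝ) (μ : Measure Θ) [IsProbabilityMeasure μ] (hμ : Ergodic S.T μ) :
    μ (S.Sset M t \ S.S't t) = 0 ∧ μ (S.R't t \ S.Sset M t) = 0 := by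
  classical
  obtain ⟨c, hcpos, hcle⟩ := hg
  obtain ⟨C, hC⟩ := S.g_bdd
  set f₀ : Θ → ℝ := fun x => Real.log (S.g (S.Tinv x)) with hf₀
  have hf₀meas : Measurable f₀ := Real.measurable_log.comp (S.g_meas.comp S.Tinv_meas)
  set K : ℝ := |Real.log c| + |Real.log C| with hK
  have hK0 : 0 ≤ K := by positivity
  have hf₀bdd : ∀ θ', |f₀ θ'| ≤ K := by
    intro θ'
    have h1 : Real.log c ≤ Real.log (S.g (S.Tinv θ')) :=
      Real.log_le_log hcpos (hcle _)
    have h2 : Real.log (S.g (S.Tinv θ')) ≤ Real.log C :=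
      Real.log_le_log (S.g_pos _) (hC _)
    rw [abs_le]
    constructor
    · have := neg_abs_le (Real.log c)
      have := abs_nonneg (Real.log C)
      simp only [hK]
      linarith
    · have := le_abs_self (Real.log C)
      have := abs_nonneg (Real.log c)
      simp only [hK]
      linarith
  -- measure preservation and ergodicity for `Tinv`
  set e : Θ ≃ᵐ Θ :=
    { toFun := S.T
      invFun := S.Tinv
      left_inv := S.left_inv
      right_inv := S.right_inv
      measurable_toFun := S.T_meas
      measurable_invFun := S.Tinv_meas } with he
  have mpinv : MeasurePreserving S.Tinv μ μ := by
    have h1 : MeasurePreserving (⇑e) μ μ := hμ.toMeasurePreserving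
    exact MeasurePreserving.symm e h1
  have herg : ∀ E : Set Θ, MeasurableSet E → S.Tinv ⁻¹' E = E → μ E = 0 ∨ μ Eᶜ = 0 := by
    intro E hEm hEinv
    refine hμ.toPreErgodic.measure_self_or_compl_eq_zero hEm ?_
    have key : ∀ y, y ∈ E ↔ S.Tinv y ∈ E := by
      intro y
      conv_lhs => rw [← hEinv]
      exact Iff.rfl
    ext x
    rw [Set.mem_preimage, key (S.T x), S.left_inv x]
  have hbirk := birkhoff_bounded (σ := S.Tinv) (μ := μ) S.Tinv_meas mpinv herg hf₀meas hK0 hf₀bdd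
  set γ0 : ℝ := ∫ x, f₀ x ∂μ with hγ0
  have hΓconv : ∀ᵐ θ ∂μ, Tendsto (fun n : ℕ => S.Γn n θ) atTop (𝓝 γ0) := by
    filter_upwards [hbirk] with θ hθ
    refine hθ.congr fun n => ?_
    rw [S.Γn_eq_birkS]
  have hnull : μ {θ | ¬ Tendsto (fun n : ℕ => S.Γn n θ) atTop (𝓝 γ0)} = 0 := ae_iff.1 hΓconv
  constructor
  · refine le_antisymm (le_trans (measure_mono ?_) hnull.le) zero_le
    rintro θ ⟨hθ1, hθ2⟩
    simp only [Set.mem_setOf_eq]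
    intro hP
    have htc : S.tc M θ = γ0 := S.tc_eq_of_tendsto M hM (fun t' θ' => hMf t' θ') hP
    have htγ : t = γ0 := by
      have h1 : S.tc M θ = t := hθ1
      rw [← h1, htc]
    exact hθ2 (show Tendsto (fun n : ℕ => S.Γn n θ) atTop (𝓝 t) from htγ ▸ hP)
  · refine le_antisymm (le_trans (measure_mono ?_) hnull.le) zero_le
    rintro θ ⟨hθ1, hθ2⟩
    simp only [Set.mem_setOf_eq]
    intro hP
    obtain ⟨nk, hmono, _hpos, htend⟩ := hθ1
    have h1 : Tendsto (fun k : ℕ => S.Γn (nk k) θ) atTop (𝓝 γ0) :=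
      hP.comp hmono.tendsto_atTop
    have htγ : t = γ0 := tendsto_nhds_unique htend h1
    have htc : S.tc M θ = γ0 := S.tc_eq_of_tendsto M hM (fun t' θ' => hMf t' θ') hP
    exact hθ2 (show S.tc M θ = t by rw [htc, htγ])

/-- assuming `inf g > 0`, for an ergodic `T`-invariant probability measure
`μ`: `μ(S_t \ S_t') = 0` and `μ(R_t' \ S_t) = 0`. -/
theorem stmt14 {Θ : Type*} [MeasurableSpace Θ] (S : Setting Θ)
    (hg : ∃ c : ℝ, 0 < c ∧ ∀ θ, c ≤ S.g θ)
    (M : ℝ → ℝ) (hM : ∀ t, 0 < M t) (hMf : ∀ t θ, S.f t θ (M t) < M t)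
    (t : ℝ) (μ : Measure Θ) [IsProbabilityMeasure μ] (hμ : Ergodic S.T μ) :
    μ (S.Sset M t \ S.S't t) = 0 ∧ μ (S.R't t \ S.Sset M t) = 0 := by
  exact stmt14' S hg M hM hMf t μ hμ
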